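/- For every x ∈ (0,1) and every n ≥ 0, F_n(x) = V_{2^n - 1}(x) and G_n(x) = V_{3^n - 1}(x). -/

import Mathlib

noncomputable def V (x : ℝ) : ℕ → ℝ
  | 0 => 1
  | n + 1 => (1 - x + V x n) / (1 + V x n)

noncomputable def F (x : ℝ) : ℕ → ℝ
  | 0 => 1
  | n + 1 => (F x n + (1 - x) / F x n) / 2

noncomputable def G (x : ℝ) : ℕ → ℝ
  | 0 => 1
  | n + 1 => G x n * ((G x n) ^ 2 + 3 * (1 - x)) / (3 * (G x n) ^ 2 + 1 - x)

lemma step_aux (y a b : ℝ) (hy0 : 0 < y) (hy1 : y < 1) (hb : 0 < b) (hab : b < a) :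
    (y^2 + y*(a+b)/(a-b)) / (1 + y*(a+b)/(a-b))
      = y*((1+y)*a+(1-y)*b)/((1+y)*a-(1-y)*b) := by
  have h0 : 0 < a - b := by linarith
  have h1 : a - b ≠ 0 := ne_of_gt h0
  have h2 : (a-b) + y*(a+b) ≠ 0 := by nlinarith
  have h3 : (1+y)*a-(1-y)*b ≠ 0 := by nlinarith
  have e1 : y^2 + y*(a+b)/(a-b) = (y^2*(a-b) + y*(a+b))/(a-b) := by field_simp
  have e2 : 1 + y*(a+b)/(a-b) = ((a-b) + y*(a+b))/(a-b) := by field_simp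
  rw [e1, e2, div_div_div_comm, div_self h1, div_one, div_eq_div_iff h2 h3]
  ring

lemma newton_aux (y a b : ℝ) (hy0 : 0 < y) (hb : 0 < b) (hab : b < a) :
    (y*(a+b)/(a-b) + y^2/(y*(a+b)/(a-b))) / 2 = y*(a^2+b^2)/(a^2-b^2) := by
  have h1 : a - b ≠ 0 := by nlinarith
  have h2 : a + b ≠ 0 := by nlinarith
  have h3 : a^2 - b^2 ≠ 0 := by nlinarith
  have h0 : 0 < a - b := by linarith
  have hy' : y ≠ 0 := ne_of_gt hy0
  field_simp
  ring

lemma halley_aux (y a b : ℝ) (hy0 : 0 < y) (hb : 0 < b) (hab : b < a) :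
    (y*(a+b)/(a-b)) * ((y*(a+b)/(a-b))^2 + 3*y^2) / (3*(y*(a+b)/(a-b))^2 + y^2)
      = y*(a^3+b^3)/(a^3-b^3) := by
  have h1 : a - b ≠ 0 := by nlinarith
  have h2 : a + b ≠ 0 := by nlinarith
  have h3 : a^3 - b^3 ≠ 0 := by
    have := pow_lt_pow_left₀ hab hb.le (by norm_num : (3:ℕ) ≠ 0)
    nlinarith
  have hy' : y ≠ 0 := ne_of_gt hy0
  have h0 : 0 < a - b := by linarith
  have hs : 0 < y*(a+b)/(a-b) := div_pos (mul_pos hy0 (by linarith)) h0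
  have h4 : 3*(y*(a+b)/(a-b))^2 + y^2 ≠ 0 := by positivity
  field_simp
  ring

theorem stmt6 (x : ℝ) (hx : x ∈ Set.Ioo (0 : ℝ) 1) (n : ℕ) :
    F x n = V x (2 ^ n - 1) ∧ G x n = V x (3 ^ n - 1) := by
  obtain ⟨hx0, hx1⟩ := hx
  set y := Real.sqrt (1 - x) with hy
  have hy2 : y ^ 2 = 1 - x := Real.sq_sqrt (by linarith)
  have hy0 : 0 < y := Real.sqrt_pos.mpr (by linarith)
  have hy1 : y < 1 := by nlinarith
  set W : ℕ → ℝ := fun m => y*((1+y)^m+(1-y)^m)/((1+y)^m-(1-y)^m) with hW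
  have hb : ∀ m : ℕ, (0:ℝ) < (1-y)^m := fun m => pow_pos (by linarith) m
  have hab : ∀ m : ℕ, m ≠ 0 → (1-y)^m < (1+y)^m := fun m hm =>
    pow_lt_pow_left₀ (by linarith) (by linarith) hm
  have hW1 : W 1 = 1 := by
    simp only [hW, pow_one]
    have : (1+y) - (1-y) = 2*y := by ring
    rw [this]
    field_simp
    ring
  have hV : ∀ n : ℕ, V x n = W (n+1) := by
    intro n
    induction n with
    | zero => simpa [V] using hW1.symm
    | succ k ih =>
      rw [V, ih]
      have hx' : 1 - x = y^2 := hy2.symm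
      rw [hx']
      have := step_aux y ((1+y)^(k+1)) ((1-y)^(k+1)) hy0 hy1 (hb _) (hab _ (by omega))
      simp only [hW]
      rw [this]
      congr 1 <;> ring
  have hF : ∀ n : ℕ, F x n = W (2^n) := by
    intro n
    induction n with
    | zero => simpa [F] using hW1.symm
    | succ k ih =>
      rw [F, ih, hy2.symm]
      have := newton_aux y ((1+y)^(2^k)) ((1-y)^(2^k)) hy0 (hb _) (hab _ (pow_pos (by norm_num : (0:ℕ) < 2) k).ne')
      simp only [hW]
      rw [this, ← pow_mul, ← pow_mul]
      have h2 : 2^k*2 = 2^(k+1) := by rw [pow_succ]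
      rw [h2]
  have hG : ∀ n : ℕ, G x n = W (3^n) := by
    intro n
    induction n with
    | zero => simpa [G] using hW1.symm
    | succ k ih =>
      rw [G, ih]
      have hx' : (3:ℝ) * (W (3^k))^2 + 1 - x = 3 * (W (3^k))^2 + y^2 := by
        rw [hy2]; ring
      rw [hx', hy2.symm]
      have := halley_aux y ((1+y)^(3^k)) ((1-y)^(3^k)) hy0 (hb _) (hab _ (pow_pos (by norm_num : (0:ℕ) < 3) k).ne')
      simp only [hW]
      rw [this, ← pow_mul, ← pow_mul]
      have h3 : 3^k*3 = 3^(k+1) := by rw [pow_succ]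
      rw [h3]
  have e2 : 2^n - 1 + 1 = 2^n := Nat.succ_pred_eq_of_pos (pow_pos (by norm_num : (0:ℕ) < 2) n)
  have e3 : 3^n - 1 + 1 = 3^n := Nat.succ_pred_eq_of_pos (pow_pos (by norm_num : (0:ℕ) < 3) n)
  constructor
  · rw [hF, hV, e2]
  · rw [hG, hV, e3]
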